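/- Suppose the l-th diagonal entry [A_{jk}]_{ll} is strictly positive for all users j, k and all streams l = 1,…,L_j, and let P_max > 0. Let F' be the set of power allocations p with p_{kl} ≥ 0 for all k, l, Σ_{k=1}^K Σ_{l=1}^{L_k} p_{kl} ≤ P_max, and SINR̄_k(p) ≥ γ_k for every k. If F' is nonempty and p* ∈ F' minimizes the total transmitted power Σ_{k=1}^K Σ_{l=1}^{L_k} p_{kl} over F', then every user's average SINR exactly meets its target: SINR̄_k(p*) = γ_k for every k = 1,…,K. -/

import Mathlib

open Matrix Finset

noncomputable def Amat {K M : ℕ} {N L : Fin K → ℕ}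
    (H : ∀ k : Fin K, Matrix (Fin M) (Fin (N k)) ℂ)
    (U : ∀ j : Fin K, Matrix (Fin M) (Fin (L j)) ℂ)
    (V : ∀ k : Fin K, Matrix (Fin (N k)) (Fin (L k)) ℂ)
    (j k : Fin K) : Matrix (Fin (L j)) (Fin (L j)) ℂ :=
  (U j)ᴴ * H k * V k * (V k)ᴴ * (H k)ᴴ * U j

/-- The real diagonal entry `[A_{jk}]_{ll}`. -/
noncomputable def Adiag {K M : ℕ} {N L : Fin K → ℕ}
    (H : ∀ k : Fin K, Matrix (Fin M) (Fin (N k)) ℂ)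
    (U : ∀ j : Fin K, Matrix (Fin M) (Fin (L j)) ℂ)
    (V : ∀ k : Fin K, Matrix (Fin (N k)) (Fin (L k)) ℂ)
    (j k : Fin K) (l : Fin (L j)) : ℝ :=
  (Amat H U V j k l l).re

/-- The average downlink SINR of user `k` under power allocation `p`. -/
noncomputable def avgSINR {K M : ℕ} {N L : Fin K → ℕ}
    (H : ∀ k : Fin K, Matrix (Fin M) (Fin (N k)) ℂ)
    (U : ∀ j : Fin K, Matrix (Fin M) (Fin (L j)) ℂ)
    (V : ∀ k : Fin K, Matrix (Fin (N k)) (Fin (L k)) ℂ)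
    (σsq : ℝ) (p : ∀ k : Fin K, Fin (L k) → ℝ) (k : Fin K) : ℝ :=
  (∑ l, p k l * Adiag H U V k k l) /
    ((∑ j ∈ univ.erase k, ∑ l, p j l * Adiag H U V j k l) + (L k : ℝ) * σsq)

/-- targets met with equality at the optimum of Problem Pp. -/
theorem sinr_targets_met_with_equality_of_min_power {K M : ℕ} {N L : Fin K → ℕ}
    (hK : 0 < K) (hL : ∀ k, 1 ≤ L k)
    (H : ∀ k : Fin K, Matrix (Fin M) (Fin (N k)) ℂ)
    (U : ∀ j : Fin K, Matrix (Fin M) (Fin (L j)) ℂ)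
    (V : ∀ k : Fin K, Matrix (Fin (N k)) (Fin (L k)) ℂ)
    (σsq : ℝ) (hσ : 0 < σsq)
    (γ : Fin K → ℝ) (hγ : ∀ k, 0 < γ k)
    (hA : ∀ j k : Fin K, ∀ l : Fin (L j), 0 < Adiag H U V j k l)
    (Pmax : ℝ) (hP : 0 < Pmax)
    (pstar : ∀ k : Fin K, Fin (L k) → ℝ)
    (hstar_nonneg : ∀ k l, 0 ≤ pstar k l)
    (hstar_sum : ∑ k, ∑ l, pstar k l ≤ Pmax)
    (hstar_sinr : ∀ k, γ k ≤ avgSINR H U V σsq pstar k)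
    (hopt : ∀ p : ∀ k : Fin K, Fin (L k) → ℝ, (∀ k l, 0 ≤ p k l) →
      (∑ k, ∑ l, p k l ≤ Pmax) → (∀ k, γ k ≤ avgSINR H U V σsq p k) →
      ∑ k, ∑ l, pstar k l ≤ ∑ k, ∑ l, p k l) :
    ∀ k : Fin K, avgSINR H U V σsq pstar k = γ k := by
  intro k
  refine le_antisymm ?_ (hstar_sinr k)
  by_contra hlt
  push_neg at hlt
  have hDpos : ∀ (p : ∀ j : Fin K, Fin (L j) → ℝ), (∀ j l, 0 ≤ p j l) → ∀ j : Fin K,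
      0 < (∑ i ∈ univ.erase j, ∑ l, p i l * Adiag H U V i j l) + (L j : ℝ) * σsq := by
    intro p hp j
    have h1 : 0 ≤ ∑ i ∈ univ.erase j, ∑ l, p i l * Adiag H U V i j l := by
      refine Finset.sum_nonneg fun i _ => Finset.sum_nonneg fun l _ =>
        mul_nonneg (hp i l) (hA i j l).le
    have hL1 : (1:ℝ) ≤ (L j : ℝ) := by exact_mod_cast hL j
    nlinarith
  set Den := (∑ i ∈ univ.erase k, ∑ l, pstar i l * Adiag H U V i k l) + (L k : ℝ) * σsq
    with hDendef
  have hDenpos : 0 < Den := hDpos pstar hstar_nonneg k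
  set Num := ∑ l, pstar k l * Adiag H U V k k l with hNumdef
  have hSINR : avgSINR H U V σsq pstar k = Num / Den := rfl
  rw [hSINR] at hlt
  have hNg : γ k * Den < Num := by
    rw [lt_div_iff₀ hDenpos] at hlt; linarith
  have hNumpos : 0 < Num := lt_trans (mul_pos (hγ k) hDenpos) hNg
  have hSk : 0 < ∑ l, pstar k l := by
    rcases lt_or_ge 0 (∑ l, pstar k l) with h | h
    · exact h
    · exfalso
      have hz : ∑ l, pstar k l = 0 :=
        le_antisymm h (Finset.sum_nonneg fun l _ => hstar_nonneg k l)
      have hall := (Finset.sum_eq_zero_iff_of_nonneg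
        (fun l _ => hstar_nonneg k l)).mp hz
      have : Num = 0 := by
        rw [hNumdef]
        refine Finset.sum_eq_zero fun l _ => by
          rw [hall l (Finset.mem_univ l), zero_mul]
      linarith
  set t := γ k * Den / Num with htdef
  have ht0 : 0 < t := div_pos (mul_pos (hγ k) hDenpos) hNumpos
  have ht1 : t < 1 := (div_lt_one hNumpos).mpr hNg
  set p' : ∀ j : Fin K, Fin (L j) → ℝ := fun j l => (if j = k then t else 1) * pstar j l
    with hp'def
  have hp'nonneg : ∀ j l, 0 ≤ p' j l := by
    intro j l
    rw [hp'def]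
    dsimp only
    split_ifs
    · exact mul_nonneg ht0.le (hstar_nonneg j l)
    · rw [one_mul]; exact hstar_nonneg j l
  -- total power strictly decreases
  have htot : ∑ j, ∑ l, p' j l < ∑ j, ∑ l, pstar j l := by
    rw [← Finset.sum_erase_add univ _ (Finset.mem_univ k),
        ← Finset.sum_erase_add univ (fun j => ∑ l, pstar j l) (Finset.mem_univ k)]
    have h1 : ∑ j ∈ univ.erase k, ∑ l, p' j l = ∑ j ∈ univ.erase k, ∑ l, pstar j l := by
      refine Finset.sum_congr rfl fun j hj => ?_
      have hjk : j ≠ k := (Finset.mem_erase.mp hj).1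
      refine Finset.sum_congr rfl fun l _ => by
        rw [hp'def]; dsimp only; rw [if_neg hjk, one_mul]
    have h2 : ∑ l, p' k l = t * ∑ l, pstar k l := by
      rw [Finset.mul_sum]
      refine Finset.sum_congr rfl fun l _ => by
        rw [hp'def]; dsimp only; rw [if_pos rfl]
    rw [h1, h2]
    have : t * ∑ l, pstar k l < ∑ l, pstar k l := by nlinarith
    linarith
  have hsum' : ∑ j, ∑ l, p' j l ≤ Pmax := le_trans htot.le hstar_sum
  -- SINR constraints at p'
  have hsinr' : ∀ j, γ j ≤ avgSINR H U V σsq p' j := by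
    intro j
    by_cases hjk : j = k
    · subst hjk
      have hNum' : ∑ l, p' j l * Adiag H U V j j l = t * Num := by
        rw [hNumdef, Finset.mul_sum]
        refine Finset.sum_congr rfl fun l _ => by
          rw [hp'def]; dsimp only; rw [if_pos rfl, mul_assoc]
      have hDen' : (∑ i ∈ univ.erase j, ∑ l, p' i l * Adiag H U V i j l)
          + (L j : ℝ) * σsq = Den := by
        rw [hDendef]
        congr 1
        refine Finset.sum_congr rfl fun i hi => ?_
        have hik : i ≠ j := (Finset.mem_erase.mp hi).1
        refine Finset.sum_congr rfl fun l _ => by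
          rw [hp'def]; dsimp only; rw [if_neg hik, one_mul]
      have : avgSINR H U V σsq p' j = t * Num / Den := by
        rw [avgSINR, hNum', hDen']
      rw [this, htdef]
      have heq : γ j * Den / Num * Num / Den = γ j := by
        field_simp
      rw [heq]
    · have hNum' : ∑ l, p' j l * Adiag H U V j j l
          = ∑ l, pstar j l * Adiag H U V j j l := by
        refine Finset.sum_congr rfl fun l _ => by
          rw [hp'def]; dsimp only; rw [if_neg hjk, one_mul]
      have hDle : (∑ i ∈ univ.erase j, ∑ l, p' i l * Adiag H U V i j l)
            + (L j : ℝ) * σsq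
          ≤ (∑ i ∈ univ.erase j, ∑ l, pstar i l * Adiag H U V i j l)
            + (L j : ℝ) * σsq := by
        refine add_le_add_left (Finset.sum_le_sum fun i _ =>
          Finset.sum_le_sum fun l _ => ?_) _
        rw [hp'def]; dsimp only
        split_ifs
        · have h0 : 0 ≤ pstar i l * Adiag H U V i j l :=
            mul_nonneg (hstar_nonneg i l) (hA i j l).le
          nlinarith
        · rw [one_mul]
      have hNj : 0 ≤ ∑ l, pstar j l * Adiag H U V j j l :=
        Finset.sum_nonneg fun l _ => mul_nonneg (hstar_nonneg j l) (hA j j l).le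
      have hD'pos := hDpos p' hp'nonneg j
      calc γ j ≤ avgSINR H U V σsq pstar j := hstar_sinr j
        _ ≤ avgSINR H U V σsq p' j := by
            rw [avgSINR, avgSINR, hNum']
            exact div_le_div_of_nonneg_left hNj hD'pos hDle
  have := hopt p' hp'nonneg hsum' hsinr'
  linarith
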